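/- arXiv:1603.07924 — 3 statements merged into one kernel-verified Lean document; each statement's English description precedes it below -/
import Mathlib

section
/- A k-testable regular language, characterized by finite sets of allowed prefixes, suffixes, and infixes of length at most k, is identifiable in the limit from positive examples: the learner that collects all observed k-length substrings (and shorter prefixes/suffixes) of the presented strings converges after finitely many examples to a hypothesis generating exactly the target language, for any enumeration of the target language. -/
/-- The k-signature of a string: its prefix of length k-1, its suffix of
length k-1, and its set of infixes of length k. -/
def kSig {α : Type} (k : ℕ) (w : List α) :
    List α × List α × Set (List α) :=
  (w.take (k - 1), w.drop (w.length - (k - 1)),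
    {u | u.length = k ∧ u <:+: w})

theorem kSig_range_finite {α : Type} [Fintype α] (k : ℕ) :
    (Set.range (kSig (α := α) k)).Finite := by
  have hA : {l : List α | l.length ≤ k - 1}.Finite := List.finite_length_le α (k - 1)
  have hC : {s : Set (List α) | s ⊆ {u : List α | u.length = k}}.Finite :=
    (List.finite_length_eq α k).finite_subsets
  apply ((hA.prod (hA.prod hC)).subset)
  rintro _ ⟨w, rfl⟩
  refine ⟨?_, ?_, ?_⟩
  · simp [kSig]
  · simp [kSig]; omega
  · intro u hu; exact hu.1

/-- a k-testable language (membership determined by the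
k-signature) over a finite alphabet is identifiable in the limit from positive
examples by collecting observed signatures. -/
theorem stmt_6 {α : Type} [Fintype α] (k : ℕ) (L : Set (List α))
    (htest : ∀ v w : List α, kSig k v = kSig k w → (v ∈ L ↔ w ∈ L))
    (E : ℕ → List α) (hE : Set.range E = L) :
    ∃ N : ℕ, ∀ n ≥ N,
      {w : List α | ∃ i ≤ n, kSig k w = kSig k (E i)} = L := by
  set g : ℕ → List α × List α × Set (List α) := fun i => kSig k (E i) with hg
  have hT : (Set.range g).Finite :=
    (kSig_range_finite (α := α) k).subset (Set.range_comp_subset_range E (kSig k))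
  -- choose a witness index for each signature in the range of g
  have hchoice : ∀ s ∈ hT.toFinset, ∃ i, g i = s := by
    intro s hs
    simpa using hT.mem_toFinset.mp hs
  choose f hf using hchoice
  set N : ℕ := (hT.toFinset.attach.image (fun s => f s.1 s.2)).sup id with hN
  refine ⟨N, fun n hn => ?_⟩
  ext w
  constructor
  · rintro ⟨i, _, hsig⟩
    have hEi : E i ∈ L := hE ▸ ⟨i, rfl⟩
    exact (htest w (E i) hsig).mpr hEi
  · intro hw
    obtain ⟨j, rfl⟩ : ∃ j, E j = w := by rwa [← hE] at hw
    have hmem : g j ∈ hT.toFinset := hT.mem_toFinset.mpr ⟨j, rfl⟩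
    refine ⟨f (g j) hmem, ?_, ?_⟩
    · refine le_trans ?_ hn
      exact Finset.le_sup (f := id)
        (Finset.mem_image.mpr ⟨⟨g j, hmem⟩, Finset.mem_attach _ _, rfl⟩)
    · exact (hf (g j) hmem).symm
end

section
/- The class of all regular languages over a two-letter alphabet is not identifiable in the limit from positive examples only: for any learner there exists a regular language L and an enumeration of L on which the learner fails to converge to a correct hypothesis. -/
namespace Stmt7

abbrev Word := List (Fin 2)

/-- all words of length ≤ k -/
def wordsLe : ℕ → List Word
  | 0 => [[]]
  | k+1 => [] :: (wordsLe k).flatMap (fun w => [(0 : Fin 2) :: w, (1 : Fin 2) :: w])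

lemma mem_wordsLe {w : Word} {k : ℕ} : w ∈ wordsLe k ↔ w.length ≤ k := by
  induction k generalizing w with
  | zero =>
    simp [wordsLe, Nat.le_zero, List.length_eq_zero_iff]
  | succ k ih =>
    simp only [wordsLe, List.mem_cons, List.mem_flatMap]
    constructor
    · rintro (rfl | ⟨v, hv, h⟩)
      · simp
      · rcases h with h | h | h
        · subst h; simpa using ih.mp hv
        · rcases h with rfl; simpa using ih.mp hv
        · simp at h
    · intro h
      cases w with
      | nil => left; rfl
      | cons a v =>
        right
        refine ⟨v, ih.mpr (by simpa using h), ?_⟩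
        fin_cases a <;> simp

/-- DFA counting length up to k+1 -/
def cntDFA (k : ℕ) : DFA (Fin 2) (Fin (k+2)) where
  step s _ := ⟨min (s.val+1) (k+1), by omega⟩
  start := ⟨0, by omega⟩
  accept := {s | s.val ≤ k}

lemma cntDFA_evalFrom (k : ℕ) (w : Word) (s : Fin (k+2)) :
    ((cntDFA k).evalFrom s w).val = min (s.val + w.length) (k+1) := by
  induction w generalizing s with
  | nil =>
    have : (cntDFA k).evalFrom s [] = s := rfl
    rw [this]
    simp
    omega
  | cons a w ih =>
    have : (cntDFA k).evalFrom s (a :: w) = (cntDFA k).evalFrom ((cntDFA k).step s a) w := rfl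
    rw [this, ih]
    have : (((cntDFA k).step s a)).val = min (s.val + 1) (k+1) := rfl
    rw [this]
    simp
    omega

lemma cntDFA_accepts (k : ℕ) : (cntDFA k).accepts = {w : Word | w.length ≤ k} := by
  ext w
  rw [DFA.mem_accepts]
  have h := cntDFA_evalFrom k w (cntDFA k).start
  have hs : ((cntDFA k).start).val = 0 := rfl
  show ((cntDFA k).evalFrom (cntDFA k).start w).val ≤ k ↔ w.length ≤ k
  rw [h, hs]
  omega

def allDFA : DFA (Fin 2) (Fin 1) where
  step s _ := s
  start := 0
  accept := Set.univ

lemma allDFA_accepts : allDFA.accepts = Set.univ := by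
  ext w
  simp only [DFA.mem_accepts, allDFA, Set.mem_univ]
  trivial

lemma range_getD {p : List Word} (h : [] ∈ p) :
    Set.range (fun n => p.getD n []) = {w | w ∈ p} := by
  ext w
  constructor
  · rintro ⟨n, rfl⟩
    show p.getD n [] ∈ {w | w ∈ p}
    by_cases hn : n < p.length
    · rw [List.getD_eq_getElem _ _ hn]; exact List.getElem_mem _
    · rw [List.getD_eq_default _ _ (Nat.le_of_not_lt hn)]; exact h
  · intro hw
    obtain ⟨n, hn, rfl⟩ := List.getElem_of_mem hw
    exact ⟨n, List.getD_eq_getElem _ _ hn⟩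

lemma mapRange_getD (p : List Word) (n : ℕ) :
    (List.range n).map (fun i => p.getD i []) =
      p.take n ++ List.replicate (n - p.length) [] := by
  induction n with
  | zero => simp
  | succ n ih =>
    rw [List.range_succ, List.map_append, ih]
    by_cases hn : n < p.length
    · have h1 : n + 1 - p.length = 0 := by omega
      have h2 : n - p.length = 0 := by omega
      rw [h1, h2]
      simp only [List.replicate_zero, List.append_nil, List.map_singleton]
      rw [List.getD_eq_getElem _ _ hn]
      rw [← List.take_concat_get hn]
      simp [List.concat_eq_append]
    · have hle : p.length ≤ n := by omega
      rw [List.take_of_length_le hle, List.take_of_length_le (by omega)]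
      have h1 : n + 1 - p.length = (n - p.length) + 1 := by omega
      rw [h1, List.replicate_succ']
      simp [List.getD_eq_default _ _ hle, List.getElem?_eq_none hle]

end Stmt7

open Stmt7

/-- the class of regular languages over a two-letter alphabet is
not identifiable in the limit from positive examples: for every learner there
is a regular language and a positive presentation of it on which the learner
does not converge to the language. -/
theorem stmt_7 :
    ∀ learner : List (List (Fin 2)) → Set (List (Fin 2)),
      ∃ (L : Set (List (Fin 2))) (E : ℕ → List (Fin 2)),
        (∃ (σ : Type) (_ : Fintype σ) (M : DFA (Fin 2) σ),
            (M.accepts : Set (List (Fin 2))) = L) ∧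
        Set.range E = L ∧
        ¬ ∃ N : ℕ, ∀ n ≥ N, learner ((List.range n).map E) = L := by
  intro learner
  by_contra hcon
  push_neg at hcon
  -- hcon : ∀ L E, regular → range = L → ∃ N, ∀ n ≥ N, learner = L
  -- Key extension step
  have key : ∀ (k : ℕ) (p : List Word), (∀ w, w ∈ p ↔ w.length ≤ k) →
      ∃ q : List Word, p <+: q ∧ (∀ w, w ∈ q ↔ w.length ≤ k+1) ∧
        ∃ m, k+1 ≤ m ∧ m ≤ q.length ∧
          learner (q.take m) = {w : Word | w.length ≤ k} := by
    intro k p hp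
    have hnil : [] ∈ p := (hp []).mpr (by simp)
    have hrange : Set.range (fun n => p.getD n []) = {w : Word | w.length ≤ k} := by
      rw [range_getD hnil]
      ext w; exact hp w
    obtain ⟨N, hN⟩ := hcon {w : Word | w.length ≤ k} (fun n => p.getD n [])
      ⟨Fin (k+2), inferInstance, cntDFA k, cntDFA_accepts k⟩ hrange
    set m := max N (max p.length (k+1)) with hm
    have hmN : N ≤ m := le_max_left _ _
    have hmp : p.length ≤ m := le_trans (le_max_left _ _) (le_max_right _ _)
    have hmk : k + 1 ≤ m := le_trans (le_max_right _ _) (le_max_right _ _)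
    have hlearn := hN m hmN
    rw [mapRange_getD, List.take_of_length_le hmp] at hlearn
    refine ⟨(p ++ List.replicate (m - p.length) []) ++ wordsLe (k+1), ?_, ?_, m, hmk, ?_, ?_⟩
    · exact (List.prefix_append _ _).trans (List.prefix_append _ _)
    · intro w
      simp only [List.mem_append, List.mem_replicate, mem_wordsLe]
      constructor
      · rintro ((hw | ⟨-, rfl⟩) | hw)
        · exact le_trans ((hp w).mp hw) (by omega)
        · simp
        · exact hw
      · intro hw; right; exact hw
    · simp only [List.length_append, List.length_replicate]
      omega
    · rw [List.take_left' (by simp; omega)]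
      exact hlearn
  choose step hpre hmem msel hm1 hm2 hlearn using key
  -- recursive construction
  let G : (k : ℕ) → {p : List Word // ∀ w, w ∈ p ↔ w.length ≤ k} :=
    fun k => Nat.rec ⟨wordsLe 0, fun w => mem_wordsLe⟩
      (fun k prev => ⟨step k prev.1 prev.2, hmem k prev.1 prev.2⟩) k
  set P : ℕ → List Word := fun k => (G k).1 with hPdef
  have hP : ∀ k (w : Word), w ∈ P k ↔ w.length ≤ k := fun k => (G k).2
  have hsucc : ∀ k, P (k+1) = step k (P k) (G k).2 := fun k => rfl
  set M : ℕ → ℕ := fun k => msel k (P k) (G k).2 with hMdef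
  have hMk : ∀ k, k + 1 ≤ M k := fun k => hm1 k (P k) (G k).2
  have hMlen : ∀ k, M k ≤ (P (k+1)).length := by
    intro k; rw [hsucc k]; exact hm2 k (P k) (G k).2
  have hMlearn : ∀ k, learner ((P (k+1)).take (M k)) = {w : Word | w.length ≤ k} := by
    intro k; rw [hsucc k]; exact hlearn k (P k) (G k).2
  have hchain : ∀ j k, j ≤ k → P j <+: P k := by
    intro j k hjk
    induction k, hjk using Nat.le_induction with
    | base => exact List.prefix_refl _
    | succ k hjk ih =>
      refine ih.trans ?_
      rw [hsucc k]; exact hpre k (P k) (G k).2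
  have hlen : ∀ k, k + 1 ≤ (P (k+1)).length := fun k => le_trans (hMk k) (hMlen k)
  set E : ℕ → Word := fun n => (P (n+1)).getD n [] with hEdef
  have hE : ∀ k n, n < (P k).length → E n = (P k).getD n [] := by
    intro k n hn
    show (P (n+1)).getD n [] = (P k).getD n []
    have hn' : n < (P (n+1)).length := lt_of_lt_of_le (Nat.lt_succ_self n) (hlen n)
    rcases le_total (n+1) k with h | h
    · rw [List.getD_eq_getElem _ _ hn', List.getD_eq_getElem _ _ hn]
      exact (hchain _ _ h).getElem hn'
    · rw [List.getD_eq_getElem _ _ hn', List.getD_eq_getElem _ _ hn]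
      exact ((hchain _ _ h).getElem hn).symm
  have hmapE : ∀ k n, n ≤ (P k).length → (List.range n).map E = (P k).take n := by
    intro k n hn
    apply List.ext_getElem
    · simp; omega
    · intro i h1 h2
      simp only [List.getElem_map, List.getElem_range, List.getElem_take]
      have hi : i < n := by simpa using h1
      rw [hE k i (lt_of_lt_of_le hi hn)]
      exact List.getD_eq_getElem _ _ _
  -- range E = univ
  have hrangeE : Set.range E = Set.univ := by
    rw [Set.eq_univ_iff_forall]
    intro w
    have hw : w ∈ P w.length := (hP w.length w).mpr le_rfl
    obtain ⟨n, hn, hget⟩ := List.getElem_of_mem hw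
    exact ⟨n, by rw [hE w.length n hn, List.getD_eq_getElem _ _ hn, hget]⟩
  obtain ⟨N, hN⟩ := hcon Set.univ E ⟨Fin 1, inferInstance, allDFA, allDFA_accepts⟩ hrangeE
  have h1 := hN (M N) (le_trans (Nat.le_succ N) (hMk N))
  rw [hmapE (N+1) (M N) (hMlen N), hMlearn N] at h1
  have : (List.replicate (N+1) (0 : Fin 2)) ∈ ({w : Word | w.length ≤ N} : Set Word) := by
    rw [h1]; trivial
  simp at this
end

section
/- Any language class containing all finite languages and at least one infinite language L∞ is not identifiable in the limit from positive examples: for every learner there exists a language in the class and a positive presentation of it on which the learner changes its mind infinitely often or converges to a wrong hypothesis. -/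
/-- Auxiliary diagonal sequence for Gold's theorem: stage `k+1` extends stage
`k` by a block that makes the learner guess something other than `Linf`, and
then the `k`-th element of the enumeration `f` of `Linf`. -/
noncomputable def goldG {X : Type} (learner : List X → Set X) (Linf : Set X) (f : ℕ → X)
    (hf : ∀ k, f k ∈ Linf)
    (h : ∀ σ : List X, (∀ x ∈ σ, x ∈ Linf) →
      ∃ τ : List X, (∀ x ∈ τ, x ∈ Linf) ∧ learner (σ ++ τ) ≠ Linf) :
    ℕ → {l : List X // ∀ x ∈ l, x ∈ Linf}
  | 0 => ⟨[], by simp⟩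
  | (k+1) =>
    let σ := goldG learner Linf f hf h k
    let τ := Classical.choose (h σ.1 σ.2)
    ⟨σ.1 ++ τ ++ [f k], by
      intro x hx
      simp only [List.mem_append, List.mem_singleton] at hx
      rcases hx with (hx | hx) | hx
      · exact σ.2 x hx
      · exact (Classical.choose_spec (h σ.1 σ.2)).1 x hx
      · exact hx ▸ hf k⟩

theorem goldG_prefix {X : Type} (learner : List X → Set X) (Linf : Set X) (f : ℕ → X)
    (hf : ∀ k, f k ∈ Linf)
    (h : ∀ σ : List X, (∀ x ∈ σ, x ∈ Linf) →
      ∃ τ : List X, (∀ x ∈ τ, x ∈ Linf) ∧ learner (σ ++ τ) ≠ Linf) :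
    ∀ {k m : ℕ}, k ≤ m →
      (goldG learner Linf f hf h k).1 <+: (goldG learner Linf f hf h m).1 := by
  intro k m hkm
  induction m with
  | zero => simp_all
  | succ m ih =>
    rcases Nat.lt_or_ge k (m+1) with hk | hk
    · refine (ih (Nat.lt_succ_iff.mp hk)).trans ?_
      refine ⟨Classical.choose (h (goldG learner Linf f hf h m).1
          (goldG learner Linf f hf h m).2) ++ [f m], ?_⟩
      simp [goldG, List.append_assoc]
    · have : k = m + 1 := le_antisymm hkm hk
      subst this; exact List.prefix_refl _

theorem goldG_len {X : Type} (learner : List X → Set X) (Linf : Set X) (f : ℕ → X)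
    (hf : ∀ k, f k ∈ Linf)
    (h : ∀ σ : List X, (∀ x ∈ σ, x ∈ Linf) →
      ∃ τ : List X, (∀ x ∈ τ, x ∈ Linf) ∧ learner (σ ++ τ) ≠ Linf) :
    ∀ k, k ≤ (goldG learner Linf f hf h k).1.length := by
  intro k
  induction k with
  | zero => simp
  | succ k ih =>
    have : (goldG learner Linf f hf h (k+1)).1.length
        = (goldG learner Linf f hf h k).1.length
          + (Classical.choose (h _ (goldG learner Linf f hf h k).2)).length + 1 := by
      simp [goldG]; omega
    omega

/-- Gold: a class containing all finite languages and at least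
one infinite language that admits a positive presentation is not identifiable
in the limit from positive examples. -/
theorem stmt_8 {X : Type} (C : Set (Set X))
    (hfin : ∀ L : Set X, L.Finite → L ∈ C)
    (Linf : Set X) (hinf : Linf ∈ C) (hInfinite : Linf.Infinite)
    (hpres : ∃ f : ℕ → X, Set.range f = Linf) :
    ∀ learner : List X → Set X,
      ∃ L ∈ C, ∃ E : ℕ → X,
        Set.range E = L ∧
        ¬ ∃ N : ℕ, ∀ n ≥ N, learner ((List.range n).map E) = L := by
  intro learner
  obtain ⟨f, hf⟩ := hpres
  have hfmem : ∀ k, f k ∈ Linf := fun k => hf ▸ Set.mem_range_self k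
  by_cases hcase : ∀ σ : List X, (∀ x ∈ σ, x ∈ Linf) →
      ∃ τ : List X, (∀ x ∈ τ, x ∈ Linf) ∧ learner (σ ++ τ) ≠ Linf
  · -- no locking sequence: build a presentation of Linf with infinitely many mind changes
    set G := goldG learner Linf f hfmem hcase with hG
    have hlen : ∀ k, k ≤ (G k).1.length := goldG_len learner Linf f hfmem hcase
    have hpre : ∀ {k m : ℕ}, k ≤ m → (G k).1 <+: (G m).1 :=
      fun h' => goldG_prefix learner Linf f hfmem hcase h'
    have hElen : ∀ n, n < (G (n+1)).1.length := fun n => lt_of_lt_of_le (Nat.lt_succ_self n) (hlen (n+1))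
    set E : ℕ → X := fun n => (G (n+1)).1[n]'(hElen n) with hE
    -- E n agrees with any late enough stage
    have hEeq : ∀ (m n : ℕ) (hn : n < (G m).1.length), E n = (G m).1[n] := by
      intro m n hn
      rcases le_total (n+1) m with hm | hm
      · exact (hpre hm).getElem (hElen n)
      · exact ((hpre hm).getElem hn).symm
    -- prefixes of E are prefixes of the stages
    have hprefix : ∀ (m n : ℕ), n ≤ (G m).1.length →
        (List.range n).map E = (G m).1.take n := by
      intro m n hn
      apply List.ext_getElem
      · simp [Nat.min_eq_left hn]
      · intro i h1 h2
        simp only [List.getElem_map, List.getElem_range, List.getElem_take]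
        exact hEeq m i (by simp at h1; omega)
    refine ⟨Linf, hinf, E, ?_, ?_⟩
    · -- range E = Linf
      apply Set.Subset.antisymm
      · rintro x ⟨n, rfl⟩
        exact (G (n+1)).2 _ (List.getElem_mem _)
      · intro x hx
        obtain ⟨k, rfl⟩ := hf ▸ hx
        have hmem : f k ∈ (G (k+1)).1 := by
          have : (G (k+1)).1 = (G k).1 ++ Classical.choose (hcase _ (G k).2) ++ [f k] := by
            simp [hG, goldG]
          simp [this]
        obtain ⟨n, hn, hget⟩ := List.getElem_of_mem hmem
        exact ⟨n, by rw [hEeq (k+1) n hn, hget]⟩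
    · -- infinitely many mind changes away from Linf
      rintro ⟨N, hN⟩
      set σ := (G N).1 with hσ
      set τ := Classical.choose (hcase σ (G N).2) with hτ
      have hspec := Classical.choose_spec (hcase σ (G N).2)
      have hlen2 : (σ ++ τ).length ≤ (G (N+1)).1.length := by
        have : (G (N+1)).1 = σ ++ τ ++ [f N] := by simp [hG, goldG, hσ, hτ]
        simp [this]
      have hpre2 : (G (N+1)).1.take (σ ++ τ).length = σ ++ τ := by
        have : (G (N+1)).1 = (σ ++ τ) ++ [f N] := by
          simp [hG, goldG, hσ, hτ, List.append_assoc]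
        rw [this, List.take_append_of_le_length le_rfl, List.take_length]
      have hNle : N ≤ (σ ++ τ).length := le_trans (hlen N) (by rw [List.length_append]; exact Nat.le_add_right _ _)
      have := hN (σ ++ τ).length hNle
      rw [hprefix (N+1) _ hlen2, hpre2] at this
      exact hspec.2 this
  · -- a locking sequence exists: fool the learner on a finite language
    push_neg at hcase
    obtain ⟨σ₀, hσ₀mem, hlock₀⟩ := hcase
    set σ : List X := σ₀ ++ [f 0] with hσ
    have hσmem : ∀ x ∈ σ, x ∈ Linf := by
      intro x hx
      rcases List.mem_append.mp hx with h1 | h1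
      · exact hσ₀mem x h1
      · simp at h1; exact h1 ▸ hfmem 0
    have hσpos : 0 < σ.length := by simp [hσ]
    have hlock : ∀ τ : List X, (∀ x ∈ τ, x ∈ Linf) → learner (σ ++ τ) = Linf := by
      intro τ hτ
      rw [hσ, List.append_assoc]
      refine hlock₀ ([f 0] ++ τ) ?_
      intro x hx
      rcases List.mem_append.mp hx with h1 | h1
      · simp at h1; exact h1 ▸ hfmem 0
      · exact hτ x h1
    set E : ℕ → X := fun n => σ[n % σ.length]'(Nat.mod_lt n hσpos) with hE
    set L : Set X := {x | x ∈ σ} with hL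
    have hLfin : L.Finite := σ.finite_toSet
    have hLne : L ≠ Linf := fun h' => hInfinite (h' ▸ hLfin)
    refine ⟨L, hfin L hLfin, E, ?_, ?_⟩
    · apply Set.Subset.antisymm
      · rintro x ⟨n, rfl⟩
        exact List.getElem_mem _
      · intro x hx
        obtain ⟨n, hn, hget⟩ := List.getElem_of_mem hx
        refine ⟨n, ?_⟩
        show σ[n % σ.length]'(Nat.mod_lt n hσpos) = x
        rw [← hget]
        congr 1
        exact Nat.mod_eq_of_lt hn
    · rintro ⟨N, hN⟩
      -- the prefix of length σ.length + N is σ ++ τ with τ ⊆ Linf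
      have hfirst : (List.range σ.length).map E = σ := by
        apply List.ext_getElem
        · simp
        · intro i h1 h2
          simp only [List.getElem_map, List.getElem_range, hE]
          congr 1
          exact Nat.mod_eq_of_lt h2
      have hsplit : (List.range (σ.length + N)).map E
          = σ ++ (List.range N).map (fun i => E (σ.length + i)) := by
        rw [List.range_add, List.map_append, hfirst, List.map_map]
        rfl
      have hmemτ : ∀ x ∈ (List.range N).map (fun i => E (σ.length + i)), x ∈ Linf := by
        intro x hx
        simp only [List.mem_map] at hx
        obtain ⟨i, _, rfl⟩ := hx
        exact hσmem _ (List.getElem_mem _)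
      have h1 := hlock _ hmemτ
      have h2 := hN (σ.length + N) (by omega)
      rw [hsplit] at h2
      rw [h2] at h1
      exact hLne h1
end
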